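/- Resonant drift of the tip trajectory: let c : ℝ → ℝ² and ω : ℝ → ℝ be continuous and T-periodic for some T > 0, let θ, R solve dθ/dt = ω(t), dR/dt = exp(τθ(t))·c(t), and suppose Θ = ∫₀ᵀ ω(s)ds is an integer multiple of 2π. Then R(t + nT) = R(t) + n·(R(T) − R(0)) for all t ∈ ℝ and all natural numbers n; in particular, if R(T) ≠ R(0) the trajectory is unbounded, drifting by the fixed displacement R(T) − R(0) each period. -/

import Mathlib

open Matrix Real intervalIntegral

/-- The 2×2 real matrix τ = [[0,-1],[1,0]], so that exp(τθ) is rotation by angle θ. -/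
noncomputable def tau : Matrix (Fin 2) (Fin 2) ℝ := !![0, -1; 1, 0]

lemma tau_mul_tau : tau * tau = -1 := by
  ext i j
  fin_cases i <;> fin_cases j <;>
    simp [tau, Matrix.mul_apply, Fin.sum_univ_two]

/-- exp commutes across `Complex.liftAux tau`. -/
lemma exp_smul_tau (x : ℝ) :
    NormedSpace.exp (x • tau) =
      Complex.liftAux tau tau_mul_tau (Complex.exp (x * Complex.I)) := by
  letI : SeminormedRing (Matrix (Fin 2) (Fin 2) ℝ) := Matrix.linftyOpSemiNormedRing
  letI : NormedRing (Matrix (Fin 2) (Fin 2) ℝ) := Matrix.linftyOpNormedRing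
  letI : NormedAlgebra ℝ (Matrix (Fin 2) (Fin 2) ℝ) := Matrix.linftyOpNormedAlgebra
  have hf : Continuous (Complex.liftAux tau tau_mul_tau) :=
    (Complex.liftAux tau tau_mul_tau).toLinearMap.continuous_of_finiteDimensional
  have h1 : x • tau = Complex.liftAux tau tau_mul_tau (x • Complex.I) := by
    rw [_root_.map_smul, Complex.liftAux_apply_I]
  rw [h1]
  erw [← NormedSpace.map_exp (Complex.liftAux tau tau_mul_tau) hf]
  congr 1
  have : NormedSpace.exp (x • Complex.I) = NormedSpace.exp (x • Complex.I) :=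
    rfl
  rw [this, ← Complex.exp_eq_exp_ℂ]
  norm_num [Complex.real_smul]

lemma exp_two_pi_int_smul_tau (k : ℤ) :
    NormedSpace.exp (((k : ℝ) * (2 * π)) • tau) = 1 := by
  rw [exp_smul_tau]
  have : ((((k : ℝ) * (2 * π)) : ℝ) : ℂ) * Complex.I = (k : ℂ) * (2 * π * Complex.I) := by
    push_cast; ring
  rw [this, Complex.exp_int_mul_two_pi_mul_I, _root_.map_one]

lemma exp_smul_tau_add (a b : ℝ) :
    NormedSpace.exp ((a + b) • tau) =
      NormedSpace.exp (a • tau) * NormedSpace.exp (b • tau) := by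
  rw [add_smul]
  exact Matrix.exp_add_of_commute _ _ (((Commute.refl tau).smul_left a).smul_right b)

/-- Resonant drift of the tip trajectory: if c and ω are continuous and T-periodic,
θ' = ω(t), R' = exp(τθ(t))c(t), and the net rotation Θ = ∫₀ᵀ ω is an integer multiple of
2π, then R(t + nT) = R(t) + n(R(T) − R(0)) for all t and n ∈ ℕ; in particular, if
R(T) ≠ R(0) then the trajectory is unbounded. -/
theorem tip_trajectory_resonant_drift
    (T : ℝ) (hT : 0 < T)
    (c : ℝ → EuclideanSpace ℝ (Fin 2)) (ω : ℝ → ℝ)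
    (hc_cont : Continuous c) (hω_cont : Continuous ω)
    (hc_per : Function.Periodic c T) (hω_per : Function.Periodic ω T)
    (θ : ℝ → ℝ) (R : ℝ → EuclideanSpace ℝ (Fin 2))
    (hθ : ∀ t, HasDerivAt θ (ω t) t)
    (hR : ∀ t, HasDerivAt R (Matrix.toEuclideanLin (NormedSpace.exp (θ t • tau)) (c t)) t)
    (hΘ : ∃ k : ℤ, (∫ s in (0:ℝ)..T, ω s) = k * (2 * π)) :
    (∀ (t : ℝ) (n : ℕ), R (t + n * T) = R t + (n : ℝ) • (R T - R 0)) ∧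
      (R T ≠ R 0 → ¬ ∃ M : ℝ, ∀ t : ℝ, ‖R t‖ ≤ M) := by
  obtain ⟨k, hk⟩ := hΘ
  -- θ(t+T) - θ(t) is constant
  have hg_deriv : ∀ t, HasDerivAt (fun t => θ (t + T) - θ t) 0 t := by
    intro t
    have h1 : HasDerivAt (fun t => θ (t + T)) (ω (t + T)) t := by
      simpa [Function.comp_def] using (hθ (t + T)).comp t ((hasDerivAt_id t).add_const T)
    simpa [hω_per t, Pi.sub_def] using h1.sub (hθ t)
  have hg_const : ∀ t, θ (t + T) - θ t = θ (0 + T) - θ 0 := by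
    intro t
    exact is_const_of_deriv_eq_zero (fun x => (hg_deriv x).differentiableAt)
      (fun x => (hg_deriv x).deriv) t 0
  have hθT : θ T - θ 0 = (k : ℝ) * (2 * π) := by
    rw [← hk]
    exact (intervalIntegral.integral_eq_sub_of_hasDerivAt
      (fun t _ => hθ t) (hω_cont.intervalIntegrable _ _)).symm
  have hθ_shift : ∀ t, θ (t + T) = θ t + (k : ℝ) * (2 * π) := by
    intro t
    have := hg_const t
    rw [zero_add] at this
    linarith [hθT]
  -- exp(τθ(t+T)) = exp(τθ(t))
  have hexp : ∀ t, NormedSpace.exp (θ (t + T) • tau) = NormedSpace.exp (θ t • tau) := by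
    intro t
    rw [hθ_shift t, exp_smul_tau_add, exp_two_pi_int_smul_tau, mul_one]
  -- R(t+T) - R(t) is constant
  have hD_deriv : ∀ t, HasDerivAt (fun t => R (t + T) - R t) 0 t := by
    intro t
    have h1 : HasDerivAt (fun t => R (t + T))
        (Matrix.toEuclideanLin (NormedSpace.exp (θ (t + T) • tau)) (c (t + T))) t := by
      simpa [Function.comp_def] using HasDerivAt.scomp t (hR (t + T)) ((hasDerivAt_id t).add_const T)
    have h2 := h1.sub (hR t)
    rw [hexp t, hc_per t, sub_self] at h2
    exact h2
  have hD : ∀ t, R (t + T) = R t + (R T - R 0) := by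
    intro t
    have h := is_const_of_deriv_eq_zero (fun x => (hD_deriv x).differentiableAt)
      (fun x => (hD_deriv x).deriv) t 0
    rw [zero_add] at h
    have : R (t + T) - R t = R T - R 0 := h
    rw [← this]; abel
  have main : ∀ (t : ℝ) (n : ℕ), R (t + n * T) = R t + (n : ℝ) • (R T - R 0) := by
    intro t n
    induction n with
    | zero => simp
    | succ n ih =>
      have : t + (n + 1 : ℕ) * T = (t + n * T) + T := by push_cast; ring
      rw [this, hD, ih]
      push_cast
      rw [add_smul, one_smul]
      abel
  refine ⟨main, fun hne ⟨M, hM⟩ => ?_⟩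
  set d := R T - R 0 with hd
  have hdpos : (0 : ℝ) < ‖d‖ := by
    simpa [hd, sub_eq_zero] using norm_sub_pos_iff.mpr hne
  obtain ⟨n, hn⟩ := exists_nat_gt ((M + ‖R 0‖) / ‖d‖)
  have h1 : R ((n : ℝ) * T) = R 0 + (n : ℝ) • d := by
    have := main 0 n
    simpa using this
  have h2 : ‖R ((n : ℝ) * T)‖ ≤ M := hM _
  have h3 : (n : ℝ) * ‖d‖ ≤ ‖R 0 + (n : ℝ) • d‖ + ‖R 0‖ := by
    have h5 : ‖(n : ℝ) • d‖ ≤ ‖R 0 + (n : ℝ) • d‖ + ‖R 0‖ := by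
      calc ‖(n : ℝ) • d‖ = ‖(R 0 + (n : ℝ) • d) - R 0‖ := by congr 1; abel
        _ ≤ _ := norm_sub_le _ _
    rw [norm_smul, Real.norm_natCast] at h5
    exact h5
  have : (n : ℝ) * ‖d‖ > M + ‖R 0‖ := by
    rwa [div_lt_iff₀ hdpos] at hn
  rw [h1] at h2
  linarith
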